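/- For the two-value MNL model, the KL divergence between the full observation distributions of models M^a and M^b (differing by swapping which of a, b is a top item) is exactly p·R·log((v+δ)/v)·C(n−1, m−1)·Δ_K^{(m)}, where Δ_K^{(m)} = (1/C(n−1,m−1))·(Σ_{S∋a,b} δ/w^a(S) + Σ_{S': a,b∉S'} [(v+δ)/(w^a(S')+v+δ) − v/(w^a(S')+v)]). -/

import Mathlib

/-- Probability of observing outcome `y` (`none` = menu not offered, `some i` = item `i`
chosen) from a single menu `S`, under the MNL model with weights `w` and offering
probability `p`. -/
noncomputable def menuObsProb {n : ℕ} (w : Fin n → ℝ) (p : ℝ) (S : Finset (Fin n)) :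
    Option (Fin n) → ℝ
  | none => 1 - p
  | some i => if i ∈ S then p * w i / (∑ j ∈ S, w j) else 0

/-- Likelihood of a full observation record `Y` (one outcome per size-`m` menu per round). -/
noncomputable def jointProb {n m R : ℕ} (w : Fin n → ℝ) (p : ℝ)
    (Y : {S : Finset (Fin n) // S ∈ Finset.powersetCard m Finset.univ} × Fin R →
      Option (Fin n)) : ℝ :=
  ∏ z, menuObsProb w p z.1.val (Y z)

open Finset

set_option maxHeartbeats 1000000 in
lemma kl_prod {ι α : Type*} [Fintype ι] [Fintype α] [DecidableEq ι]
    (P Q : ι → α → ℝ) (hP0 : ∀ z y, 0 ≤ P z y) (hP1 : ∀ z, ∑ y, P z y = 1)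
    (hQ : ∀ z y, P z y ≠ 0 → 0 < Q z y) :
    ∑ Y : ι → α, (∏ z, P z (Y z)) * Real.log ((∏ z, P z (Y z)) / (∏ z, Q z (Y z)))
      = ∑ z, ∑ y, P z y * Real.log (P z y / Q z y) := by
  have key : ∀ Y : ι → α, (∏ z, P z (Y z)) * Real.log ((∏ z, P z (Y z)) / (∏ z, Q z (Y z)))
      = ∑ z, (∏ z', P z' (Y z')) * Real.log (P z (Y z) / Q z (Y z)) := by
    intro Y
    by_cases h : ∀ z, P z (Y z) ≠ 0
    · have hprod : (∏ z, P z (Y z)) / (∏ z, Q z (Y z)) = ∏ z, P z (Y z) / Q z (Y z) :=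
        (prod_div_distrib _ _).symm
      rw [hprod, Real.log_prod (fun z _ =>
        div_ne_zero (h z) (ne_of_gt (hQ z (Y z) (h z)))), Finset.mul_sum]
    · push_neg at h
      obtain ⟨z0, hz0⟩ := h
      have h0 : (∏ z, P z (Y z)) = 0 := Finset.prod_eq_zero (mem_univ z0) hz0
      rw [h0]
      simp
  simp_rw [key]
  rw [Finset.sum_comm]
  refine Finset.sum_congr rfl (fun z0 _ => ?_)
  have hstep : ∀ Y : ι → α, (∏ z', P z' (Y z')) * Real.log (P z0 (Y z0) / Q z0 (Y z0))
      = ∏ z', (if z' = z0 then P z' (Y z') * Real.log (P z' (Y z') / Q z' (Y z'))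
          else P z' (Y z')) := by
    intro Y
    rw [Fintype.prod_eq_mul_prod_compl z0 (fun z' => (if z' = z0 then
          P z' (Y z') * Real.log (P z' (Y z') / Q z' (Y z')) else P z' (Y z'))),
        Fintype.prod_eq_mul_prod_compl z0 (fun z' => P z' (Y z'))]
    rw [if_pos rfl, Finset.prod_congr rfl (fun z hz => if_neg (by simpa using hz))]
    ring
  calc ∑ Y : ι → α, (∏ z', P z' (Y z')) * Real.log (P z0 (Y z0) / Q z0 (Y z0))
      = ∑ Y ∈ Fintype.piFinset (fun _ : ι => (univ : Finset α)), ∏ z',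
          (if z' = z0 then P z' (Y z') * Real.log (P z' (Y z') / Q z' (Y z'))
            else P z' (Y z')) := by
        rw [Fintype.piFinset_univ]
        exact Finset.sum_congr rfl (fun Y _ => hstep Y)
    _ = ∏ z', ∑ y, (if z' = z0 then P z' y * Real.log (P z' y / Q z' y) else P z' y) :=
        (prod_univ_sum (fun _ : ι => (univ : Finset α))
          (fun z' y => if z' = z0 then P z' y * Real.log (P z' y / Q z' y) else P z' y)).symm
    _ = ∑ y, P z0 y * Real.log (P z0 y / Q z0 y) := by
        rw [Fintype.prod_eq_mul_prod_compl z0]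
        have h1 : ∀ i ∈ ({z0}ᶜ : Finset ι),
            (∑ y, (if i = z0 then P i y * Real.log (P i y / Q i y) else P i y)) = 1 := by
          intro i hi
          rw [Finset.sum_congr rfl (fun y _ => if_neg (by simpa using hi))]
          exact hP1 i
        rw [Finset.prod_congr rfl h1, Finset.prod_const_one, mul_one]
        exact Finset.sum_congr rfl (fun y _ => if_pos rfl)


lemma menuObsProb_nonneg {n : ℕ} (w : Fin n → ℝ) (p : ℝ) (S : Finset (Fin n))
    (hp0 : 0 ≤ p) (hp1 : p ≤ 1) (hw : ∀ i, 0 < w i) (y : Option (Fin n)) :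
    0 ≤ menuObsProb w p S y := by
  match y with
  | none => simpa [menuObsProb] using hp1
  | some i =>
    simp only [menuObsProb]
    split
    · rename_i h
      have hW : 0 < ∑ j ∈ S, w j := Finset.sum_pos (fun i _ => hw i) ⟨i, h⟩
      exact div_nonneg (mul_nonneg hp0 (hw i).le) hW.le
    · exact le_refl _

lemma menuObsProb_sum {n : ℕ} (w : Fin n → ℝ) (p : ℝ) (S : Finset (Fin n))
    (hw : ∀ i, 0 < w i) (hS : S.Nonempty) :
    ∑ y : Option (Fin n), menuObsProb w p S y = 1 := by
  have hW : 0 < ∑ j ∈ S, w j := Finset.sum_pos (fun i _ => hw i) hS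
  rw [Fintype.sum_option]
  simp only [menuObsProb]
  rw [Finset.sum_ite_mem, univ_inter, ← Finset.sum_div, ← Finset.mul_sum,
    mul_div_assoc, div_self hW.ne', mul_one]
  ring

lemma menuObsProb_support {n : ℕ} (wA wB : Fin n → ℝ) (p : ℝ) (S : Finset (Fin n))
    (hp0 : 0 < p) (hp1 : p ≤ 1) (hwB : ∀ i, 0 < wB i) (y : Option (Fin n))
    (h : menuObsProb wA p S y ≠ 0) : 0 < menuObsProb wB p S y := by
  have hW : S.Nonempty → 0 < ∑ j ∈ S, wB j := fun hS => Finset.sum_pos (fun i _ => hwB i) hS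
  match y with
  | none =>
    simp only [menuObsProb] at h ⊢
    rcases lt_or_eq_of_le hp1 with h' | h'
    · linarith
    · exact absurd (by rw [← h']; ring) h
  | some i =>
    simp only [menuObsProb] at h ⊢
    by_cases hi : i ∈ S
    · rw [if_pos hi]
      exact div_pos (mul_pos hp0 (hwB i)) (hW ⟨i, hi⟩)
    · exact absurd (if_neg hi) h

lemma klMenu_eq {n : ℕ} (wA wB : Fin n → ℝ) (p : ℝ) (S : Finset (Fin n))
    (hp0 : 0 < p) (hwA : ∀ i, 0 < wA i) (hwB : ∀ i, 0 < wB i) (hS : S.Nonempty) :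
    ∑ y : Option (Fin n), menuObsProb wA p S y *
        Real.log (menuObsProb wA p S y / menuObsProb wB p S y)
      = (p / ∑ i ∈ S, wA i) * (∑ i ∈ S, wA i * Real.log (wA i / wB i))
        + p * Real.log ((∑ i ∈ S, wB i) / (∑ i ∈ S, wA i)) := by
  have hWA : 0 < ∑ j ∈ S, wA j := Finset.sum_pos (fun i _ => hwA i) hS
  have hWB : 0 < ∑ j ∈ S, wB j := Finset.sum_pos (fun i _ => hwB i) hS
  rw [Fintype.sum_option]
  have hnone : menuObsProb wA p S none *
      Real.log (menuObsProb wA p S none / menuObsProb wB p S none) = 0 := by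
    simp only [menuObsProb]
    by_cases h : (1 : ℝ) - p = 0
    · rw [h]; ring
    · rw [div_self h, Real.log_one, mul_zero]
  rw [hnone, zero_add]
  have hterm : ∀ i : Fin n, menuObsProb wA p S (some i) *
      Real.log (menuObsProb wA p S (some i) / menuObsProb wB p S (some i))
      = if i ∈ S then (p * wA i / (∑ j ∈ S, wA j)) *
          (Real.log (wA i / wB i) + Real.log ((∑ j ∈ S, wB j) / (∑ j ∈ S, wA j))) else 0 := by
    intro i
    simp only [menuObsProb]
    by_cases h : i ∈ S
    · rw [if_pos h, if_pos h, if_pos h]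
      congr 1
      have hratio : (p * wA i / (∑ j ∈ S, wA j)) / (p * wB i / (∑ j ∈ S, wB j))
          = (wA i / wB i) * ((∑ j ∈ S, wB j) / (∑ j ∈ S, wA j)) := by
        have h1 : p ≠ 0 := hp0.ne'
        have h2 : wB i ≠ 0 := (hwB i).ne'
        have h3 : (∑ j ∈ S, wA j) ≠ 0 := hWA.ne'
        have h4 : (∑ j ∈ S, wB j) ≠ 0 := hWB.ne'
        field_simp
      rw [hratio, Real.log_mul (div_pos (hwA i) (hwB i)).ne' (div_pos hWB hWA).ne']
    · simp [h]
  rw [Finset.sum_congr rfl (fun i _ => hterm i), Finset.sum_ite_mem, univ_inter]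
  have hsplit : ∀ i ∈ S, (p * wA i / (∑ j ∈ S, wA j)) *
      (Real.log (wA i / wB i) + Real.log ((∑ j ∈ S, wB j) / (∑ j ∈ S, wA j)))
      = (p / ∑ j ∈ S, wA j) * (wA i * Real.log (wA i / wB i))
        + (p / ∑ j ∈ S, wA j) * wA i * Real.log ((∑ j ∈ S, wB j) / (∑ j ∈ S, wA j)) := by
    intro i _
    ring
  rw [Finset.sum_congr rfl hsplit, Finset.sum_add_distrib, ← Finset.mul_sum]
  congr 1
  rw [← Finset.sum_mul, ← Finset.mul_sum, div_mul_eq_mul_div, mul_div_assoc,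
    div_self hWA.ne', mul_one]


lemma sum_insert_bij {n : ℕ} (a b : Fin n) (hab : a ≠ b) {m : ℕ} (hm : 1 ≤ m)
    (f : Finset (Fin n) → ℝ) :
    ∑ S ∈ (Finset.powersetCard m (Finset.univ : Finset (Fin n))).filter
        (fun S => a ∈ S ∧ b ∉ S), f S
      = ∑ S' ∈ (Finset.powersetCard (m-1) (Finset.univ : Finset (Fin n))).filter
          (fun S' => a ∉ S' ∧ b ∉ S'), f (insert a S') := by
  apply Finset.sum_nbij' (fun S => S.erase a) (fun S' => insert a S')
  · intro S hS
    rw [mem_filter, Finset.mem_powersetCard_univ] at hS ⊢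
    obtain ⟨hc, haS, hbS⟩ := hS
    refine ⟨?_, Finset.notMem_erase a S, fun h => hbS (Finset.mem_of_mem_erase h)⟩
    rw [Finset.card_erase_of_mem haS, hc]
  · intro S' hS'
    rw [mem_filter, Finset.mem_powersetCard_univ] at hS' ⊢
    obtain ⟨hc, haS', hbS'⟩ := hS'
    refine ⟨?_, Finset.mem_insert_self a S', ?_⟩
    · rw [Finset.card_insert_of_notMem haS', hc]
      omega
    · rw [Finset.mem_insert]
      rintro (h | h)
      · exact hab h.symm
      · exact hbS' h
  · intro S hS
    rw [mem_filter] at hS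
    exact Finset.insert_erase hS.2.1
  · intro S' hS'
    rw [mem_filter] at hS'
    exact Finset.erase_insert hS'.2.1
  · intro S hS
    rw [mem_filter] at hS
    rw [Finset.insert_erase hS.2.1]



set_option maxHeartbeats 1000000 in
open Finset in
theorem kl_full_observation (n m K R : ℕ) (hm : 2 ≤ m) (hmn : m ≤ n) (hR : 1 ≤ R)
    (p v δ : ℝ) (hp0 : 0 < p) (hp1 : p ≤ 1) (hv : 0 < v) (hδ : 0 < δ)
    (T0 : Finset (Fin n)) (hT0 : T0.card = K - 1)
    (a b : Fin n) (hab : a ≠ b) (haT : a ∉ T0) (hbT : b ∉ T0)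
    (wA wB : Fin n → ℝ)
    (hwA : ∀ i, wA i = if i ∈ insert a T0 then v + δ else v)
    (hwB : ∀ i, wB i = if i ∈ insert b T0 then v + δ else v)
    (Δ : ℝ)
    (hΔ : Δ = (1 / ((n - 1).choose (m - 1) : ℝ)) *
      ((∑ S ∈ (Finset.powersetCard m (Finset.univ : Finset (Fin n))).filter
            (fun S => a ∈ S ∧ b ∈ S), δ / ∑ i ∈ S, wA i) +
        ∑ S' ∈ (Finset.powersetCard (m - 1) (Finset.univ : Finset (Fin n))).filter
            (fun S' => a ∉ S' ∧ b ∉ S'),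
          ((v + δ) / ((∑ i ∈ S', wA i) + v + δ) - v / ((∑ i ∈ S', wA i) + v)))) :
    ∑ Y : {S : Finset (Fin n) // S ∈ Finset.powersetCard m Finset.univ} × Fin R →
        Option (Fin n),
      jointProb (m := m) (R := R) wA p Y *
        Real.log (jointProb (m := m) (R := R) wA p Y / jointProb (m := m) (R := R) wB p Y) =
      p * R * Real.log ((v + δ) / v) * ((n - 1).choose (m - 1) : ℝ) * Δ := by
  have hwApos : ∀ i, 0 < wA i := by intro i; rw [hwA i]; split <;> linarith
  have hwBpos : ∀ i, 0 < wB i := by intro i; rw [hwB i]; split <;> linarith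
  have hwAa : wA a = v + δ := by rw [hwA a, if_pos (mem_insert_self a T0)]
  have hwAb : wA b = v := by
    rw [hwA b, if_neg]
    rw [mem_insert]
    rintro (h | h)
    · exact hab h.symm
    · exact hbT h
  have hwBa : wB a = v := by
    rw [hwB a, if_neg]
    rw [mem_insert]
    rintro (h | h)
    · exact hab h
    · exact haT h
  have hwBb : wB b = v + δ := by rw [hwB b, if_pos (mem_insert_self b T0)]
  set L := Real.log ((v + δ) / v) with hL
  set P := Finset.powersetCard m (Finset.univ : Finset (Fin n)) with hP
  have hSne : ∀ S ∈ P, S.Nonempty := by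
    intro S hS
    rw [hP, Finset.mem_powersetCard_univ] at hS
    rw [← Finset.card_pos, hS]; omega
  have hWpos : ∀ S ∈ P, 0 < ∑ i ∈ S, wA i :=
    fun S hS => Finset.sum_pos (fun i _ => hwApos i) (hSne S hS)
  -- pointwise identities
  have hABlog : ∀ i, wA i * Real.log (wA i / wB i)
      = (if i = a then (v + δ) * L else 0) - (if i = b then v * L else 0) := by
    intro i
    by_cases hia : i = a
    · subst hia
      rw [if_pos rfl, if_neg hab, hwAa, hwBa, hL, sub_zero]
    · by_cases hib : i = b
      · subst hib
        rw [hwAb, hwBb, if_neg hia, if_pos rfl, zero_sub]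
        rw [show v / (v + δ) = ((v + δ) / v)⁻¹ by rw [inv_div], Real.log_inv]
        ring
      · have heq : wA i = wB i := by
          rw [hwA i, hwB i]
          simp [mem_insert, hia, hib]
        rw [heq, div_self (hwBpos i).ne', Real.log_one, mul_zero, if_neg hia, if_neg hib,
          sub_zero]
  have hABw : ∀ i, wB i = wA i + (if i = b then δ else 0) - (if i = a then δ else 0) := by
    intro i
    by_cases hia : i = a
    · subst hia
      rw [if_neg hab, if_pos rfl, hwAa, hwBa]; ring
    · by_cases hib : i = b
      · subst hib
        rw [if_pos rfl, if_neg hia, hwAb, hwBb]; ring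
      · have heq : wA i = wB i := by
          rw [hwA i, hwB i]
          simp [mem_insert, hia, hib]
        rw [← heq, if_neg hia, if_neg hib]; ring
  have hWB : ∀ S : Finset (Fin n), (∑ i ∈ S, wB i)
      = (∑ i ∈ S, wA i) + (if b ∈ S then δ else 0) - (if a ∈ S then δ else 0) := by
    intro S
    rw [Finset.sum_congr rfl (fun i _ => hABw i), Finset.sum_sub_distrib,
      Finset.sum_add_distrib, Finset.sum_ite_eq' S b (fun _ => δ),
      Finset.sum_ite_eq' S a (fun _ => δ)]
  have hSumLog : ∀ S : Finset (Fin n), (∑ i ∈ S, wA i * Real.log (wA i / wB i))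
      = (if a ∈ S then (v + δ) * L else 0) - (if b ∈ S then v * L else 0) := by
    intro S
    rw [Finset.sum_congr rfl (fun i _ => hABlog i), Finset.sum_sub_distrib,
      Finset.sum_ite_eq' S a (fun _ => (v + δ) * L), Finset.sum_ite_eq' S b (fun _ => v * L)]
  -- step 1: product KL decomposition
  have hdecomp := kl_prod (ι := {S : Finset (Fin n) // S ∈ P} × Fin R)
    (α := Option (Fin n))
    (fun z y => menuObsProb wA p z.1.val y) (fun z y => menuObsProb wB p z.1.val y)
    (fun z y => menuObsProb_nonneg wA p z.1.val hp0.le hp1 hwApos y)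
    (fun z => menuObsProb_sum wA p z.1.val hwApos (hSne z.1.val z.1.property))
    (fun z y h => menuObsProb_support wA wB p z.1.val hp0 hp1 hwBpos y h)
  simp only [jointProb]
  rw [hdecomp, Fintype.sum_prod_type]
  have hconst : ∀ x : {S : Finset (Fin n) // S ∈ P},
      ∑ _r : Fin R, (∑ y, menuObsProb wA p x.val y *
          Real.log (menuObsProb wA p x.val y / menuObsProb wB p x.val y))
        = (R : ℝ) * ∑ y, menuObsProb wA p x.val y *
            Real.log (menuObsProb wA p x.val y / menuObsProb wB p x.val y) := by
    intro x
    rw [Finset.sum_const, Finset.card_univ, Fintype.card_fin, nsmul_eq_mul]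
  rw [Finset.sum_congr rfl (fun x _ => hconst x), ← Finset.mul_sum,
    Finset.sum_coe_sort P (fun S => ∑ y, menuObsProb wA p S y *
      Real.log (menuObsProb wA p S y / menuObsProb wB p S y))]
  -- step 2: per-menu KL
  have hmenu : ∀ S ∈ P, (∑ y, menuObsProb wA p S y *
      Real.log (menuObsProb wA p S y / menuObsProb wB p S y))
      = (p / ∑ i ∈ S, wA i) *
          ((if a ∈ S then (v + δ) * L else 0) - (if b ∈ S then v * L else 0))
        + p * Real.log (((∑ i ∈ S, wA i) + (if b ∈ S then δ else 0)
            - (if a ∈ S then δ else 0)) / (∑ i ∈ S, wA i)) := by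
    intro S hS
    rw [klMenu_eq wA wB p S hp0 hwApos hwBpos (hSne S hS), hSumLog S, hWB S]
  rw [Finset.sum_congr rfl hmenu]
  -- step 3: split the sum by membership of a and b
  rw [← Finset.sum_filter_add_sum_filter_not P (fun S => a ∈ S),
    ← Finset.sum_filter_add_sum_filter_not (P.filter (fun S => a ∈ S)) (fun S => b ∈ S),
    ← Finset.sum_filter_add_sum_filter_not (P.filter (fun S => ¬ a ∈ S)) (fun S => b ∈ S),
    Finset.filter_filter, Finset.filter_filter, Finset.filter_filter, Finset.filter_filter]
  have hW0' : ∀ S' : Finset (Fin n), (0:ℝ) ≤ ∑ i ∈ S', wA i :=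
    fun S' => Finset.sum_nonneg (fun i _ => (hwApos i).le)
  have h1 : ∑ x ∈ P.filter (fun S => a ∈ S ∧ b ∈ S),
      ((p / ∑ i ∈ x, wA i) * ((if a ∈ x then (v + δ) * L else 0) - if b ∈ x then v * L else 0) +
        p * Real.log (((∑ i ∈ x, wA i + if b ∈ x then δ else 0) - if a ∈ x then δ else 0)
          / ∑ i ∈ x, wA i))
      = p * L * ∑ S ∈ P.filter (fun S => a ∈ S ∧ b ∈ S), δ / ∑ i ∈ S, wA i := by
    rw [Finset.mul_sum]
    refine Finset.sum_congr rfl (fun x hx => ?_)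
    rw [mem_filter] at hx
    obtain ⟨hxP, ha, hb⟩ := hx
    have hW := hWpos x hxP
    rw [if_pos ha, if_pos hb, if_pos hb, if_pos ha,
      show ((∑ i ∈ x, wA i) + δ) - δ = ∑ i ∈ x, wA i from by ring, div_self hW.ne',
      Real.log_one, mul_zero, add_zero]
    ring
  have h4 : ∑ x ∈ P.filter (fun S => a ∉ S ∧ b ∉ S),
      ((p / ∑ i ∈ x, wA i) * ((if a ∈ x then (v + δ) * L else 0) - if b ∈ x then v * L else 0) +
        p * Real.log (((∑ i ∈ x, wA i + if b ∈ x then δ else 0) - if a ∈ x then δ else 0)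
          / ∑ i ∈ x, wA i)) = 0 := by
    refine Finset.sum_eq_zero (fun x hx => ?_)
    rw [mem_filter] at hx
    obtain ⟨hxP, ha, hb⟩ := hx
    have hW := hWpos x hxP
    rw [if_neg ha, if_neg hb, if_neg hb, if_neg ha,
      show ((∑ i ∈ x, wA i) + 0) - 0 = ∑ i ∈ x, wA i from by ring, div_self hW.ne',
      Real.log_one]
    ring
  have h2 : ∑ x ∈ P.filter (fun S => a ∈ S ∧ b ∉ S),
      ((p / ∑ i ∈ x, wA i) * ((if a ∈ x then (v + δ) * L else 0) - if b ∈ x then v * L else 0) +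
        p * Real.log (((∑ i ∈ x, wA i + if b ∈ x then δ else 0) - if a ∈ x then δ else 0)
          / ∑ i ∈ x, wA i))
      = ∑ S' ∈ (Finset.powersetCard (m - 1) (Finset.univ : Finset (Fin n))).filter
          (fun S' => a ∉ S' ∧ b ∉ S'),
          (p * L * ((v + δ) / ((∑ i ∈ S', wA i) + v + δ))
            + p * (Real.log ((∑ i ∈ S', wA i) + v) - Real.log ((∑ i ∈ S', wA i) + v + δ))) := by
    rw [hP, sum_insert_bij a b hab (by omega)]
    refine Finset.sum_congr rfl (fun S' hS' => ?_)
    rw [mem_filter] at hS'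
    obtain ⟨hS'P, haS', hbS'⟩ := hS'
    have hbm : b ∉ insert a S' := by
      rw [mem_insert]
      rintro (h | h)
      · exact hab h.symm
      · exact hbS' h
    have hsum : (∑ i ∈ insert a S', wA i) = (∑ i ∈ S', wA i) + (v + δ) := by
      rw [Finset.sum_insert haS', hwAa]; ring
    have hW' := hW0' S'
    rw [if_pos (mem_insert_self a S'), if_neg hbm, if_neg hbm, if_pos (mem_insert_self a S'),
      hsum,
      show ((∑ i ∈ S', wA i) + (v + δ) + 0) - δ = (∑ i ∈ S', wA i) + v from by ring,
      show (∑ i ∈ S', wA i) + (v + δ) = (∑ i ∈ S', wA i) + v + δ from by ring,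
      Real.log_div (ne_of_gt (by linarith : (0:ℝ) < (∑ i ∈ S', wA i) + v))
        (ne_of_gt (by linarith : (0:ℝ) < (∑ i ∈ S', wA i) + v + δ))]
    ring
  have h3 : ∑ x ∈ P.filter (fun S => a ∉ S ∧ b ∈ S),
      ((p / ∑ i ∈ x, wA i) * ((if a ∈ x then (v + δ) * L else 0) - if b ∈ x then v * L else 0) +
        p * Real.log (((∑ i ∈ x, wA i + if b ∈ x then δ else 0) - if a ∈ x then δ else 0)
          / ∑ i ∈ x, wA i))
      = ∑ S' ∈ (Finset.powersetCard (m - 1) (Finset.univ : Finset (Fin n))).filter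
          (fun S' => a ∉ S' ∧ b ∉ S'),
          (p * (Real.log ((∑ i ∈ S', wA i) + v + δ) - Real.log ((∑ i ∈ S', wA i) + v))
            - p * L * (v / ((∑ i ∈ S', wA i) + v))) := by
    rw [hP, show (Finset.powersetCard m (Finset.univ : Finset (Fin n))).filter
          (fun S => a ∉ S ∧ b ∈ S)
        = (Finset.powersetCard m (Finset.univ : Finset (Fin n))).filter
          (fun S => b ∈ S ∧ a ∉ S) from Finset.filter_congr (fun S _ => by tauto),
      sum_insert_bij b a hab.symm (by omega),
      show (Finset.powersetCard (m - 1) (Finset.univ : Finset (Fin n))).filter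
          (fun S' => b ∉ S' ∧ a ∉ S')
        = (Finset.powersetCard (m - 1) (Finset.univ : Finset (Fin n))).filter
          (fun S' => a ∉ S' ∧ b ∉ S') from Finset.filter_congr (fun S _ => by tauto)]
    refine Finset.sum_congr rfl (fun S' hS' => ?_)
    rw [mem_filter] at hS'
    obtain ⟨hS'P, haS', hbS'⟩ := hS'
    have ham : a ∉ insert b S' := by
      rw [mem_insert]
      rintro (h | h)
      · exact hab h
      · exact haS' h
    have hsum : (∑ i ∈ insert b S', wA i) = (∑ i ∈ S', wA i) + v := by
      rw [Finset.sum_insert hbS', hwAb]; ring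
    have hW' := hW0' S'
    rw [if_neg ham, if_pos (mem_insert_self b S'), if_pos (mem_insert_self b S'), if_neg ham,
      hsum,
      show ((∑ i ∈ S', wA i) + v + δ) - 0 = (∑ i ∈ S', wA i) + v + δ from by ring,
      Real.log_div (ne_of_gt (by linarith : (0:ℝ) < (∑ i ∈ S', wA i) + v + δ))
        (ne_of_gt (by linarith : (0:ℝ) < (∑ i ∈ S', wA i) + v))]
    ring
  have h23 : (∑ S' ∈ (Finset.powersetCard (m - 1) (Finset.univ : Finset (Fin n))).filter
          (fun S' => a ∉ S' ∧ b ∉ S'),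
          (p * L * ((v + δ) / ((∑ i ∈ S', wA i) + v + δ))
            + p * (Real.log ((∑ i ∈ S', wA i) + v) - Real.log ((∑ i ∈ S', wA i) + v + δ))))
      + (∑ S' ∈ (Finset.powersetCard (m - 1) (Finset.univ : Finset (Fin n))).filter
          (fun S' => a ∉ S' ∧ b ∉ S'),
          (p * (Real.log ((∑ i ∈ S', wA i) + v + δ) - Real.log ((∑ i ∈ S', wA i) + v))
            - p * L * (v / ((∑ i ∈ S', wA i) + v))))
      = p * L * ∑ S' ∈ (Finset.powersetCard (m - 1) (Finset.univ : Finset (Fin n))).filter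
          (fun S' => a ∉ S' ∧ b ∉ S'),
          ((v + δ) / ((∑ i ∈ S', wA i) + v + δ) - v / ((∑ i ∈ S', wA i) + v)) := by
    rw [← Finset.sum_add_distrib, Finset.mul_sum]
    exact Finset.sum_congr rfl (fun S' _ => by ring)
  rw [h1, h2, h3, h4, add_zero, add_assoc, h23, hΔ]
  have hC : ((n - 1).choose (m - 1) : ℝ) ≠ 0 := by
    have hpos : 0 < (n - 1).choose (m - 1) := Nat.choose_pos (by omega)
    exact_mod_cast hpos.ne'
  field_simp
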